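/- Let G be a 2-connected K_{1,4}-free split graph with maximum clique K, |K| ≥ |I| ≥ 8, Δ^I = 3, no short cycles, and let 𝕮 be the collection of maximal alternating paths in G − N^I(v) for v ∈ K with |N(v)∩I| = 3. Then 𝕮 contains at most two paths on 7 vertices, and if it contains two paths on 7 vertices then it contains no path on 5 vertices. -/

import Mathlib

open SimpleGraph

variable {V : Type*}

/-- `I` is an independent set in `G`. -/
def IndepOn (G : SimpleGraph V) (I : Set V) : Prop :=
  ∀ ⦃u⦄, u ∈ I → ∀ ⦃v⦄, v ∈ I → ¬ G.Adj u v

/-- `(K, I)` is a split partition of `G`: `K` a clique, `I` independent,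
partitioning the vertex set. -/
def SplitPartition (G : SimpleGraph V) (K I : Set V) : Prop :=
  Disjoint K I ∧ K ∪ I = Set.univ ∧ G.IsClique K ∧ IndepOn G I

/-- `K` is a maximum clique of `G`. -/
def MaxClique (G : SimpleGraph V) (K : Set V) : Prop :=
  G.IsClique K ∧ ∀ K' : Set V, G.IsClique K' → K'.ncard ≤ K.ncard

/-- `G` has no induced copy of the star `K_{1,n}` (center plus `n` pairwise
nonadjacent leaves). -/
def StarFree (G : SimpleGraph V) (n : ℕ) : Prop :=
  ¬ ∃ (c : V) (L : Finset V), L.card = n ∧ c ∉ L ∧ (∀ l ∈ L, G.Adj c l) ∧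
      (∀ l ∈ L, ∀ m ∈ L, l ≠ m → ¬ G.Adj l m)

/-- `G` is 2-connected: at least 3 vertices and deleting any single vertex
leaves a connected graph. -/
def TwoConnected (G : SimpleGraph V) [Fintype V] : Prop :=
  3 ≤ Fintype.card V ∧ ∀ v : V, (G.induce (({v} : Set V)ᶜ)).Connected

/-- The bipartite subgraph `H` of `G` on `V_a = {u ∈ I : deg u = 2}` and
`V_b = N(V_a)`: its edges are exactly the edges of `G` incident to a degree-2
vertex of `I`. -/
def shortSub (G : SimpleGraph V) (I : Set V) : SimpleGraph V where
  Adj x y := G.Adj x y ∧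
    ((x ∈ I ∧ (G.neighborSet x).ncard = 2) ∨ (y ∈ I ∧ (G.neighborSet y).ncard = 2))
  symm := ⟨fun x y h => ⟨h.1.symm, h.2.symm⟩⟩
  loopless := ⟨fun x h => G.irrefl h.1⟩

/-- `G` has a short cycle: an induced cycle in the bipartite subgraph
`shortSub G I` missing at least one vertex of `K`. -/
def HasShortCycle (G : SimpleGraph V) (K I : Set V) : Prop :=
  ∃ (n : ℕ) (f : cycleGraph n ↪g shortSub G I), 3 ≤ n ∧ ∃ k ∈ K, k ∉ Set.range ⇑f

/-- `(w, x)` describes an alternating path `w 0, x 0, w 1, x 1, …, w (j-1)`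
in `G - A` with the `j` vertices `w i` in `K` and the `j - 1` vertices `x i`
in `I`, all distinct and avoiding `A`. -/
def IsAltPath (G : SimpleGraph V) (K I A : Set V) (j : ℕ) (w x : ℕ → V) : Prop :=
  2 ≤ j ∧
  (∀ i < j, w i ∈ K ∧ w i ∉ A) ∧
  (∀ i < j - 1, x i ∈ I ∧ x i ∉ A) ∧
  (∀ i < j, ∀ k < j, w i = w k → i = k) ∧
  (∀ i < j - 1, ∀ k < j - 1, x i = x k → i = k) ∧
  (∀ i < j, ∀ k < j - 1, w i ≠ x k) ∧
  (∀ i < j - 1, G.Adj (w i) (x i) ∧ G.Adj (w (i + 1)) (x i))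

/-- The vertex set of the alternating path `(w, x)` with `j` clique vertices. -/
def altPathVerts (j : ℕ) (w x : ℕ → V) : Set V :=
  {u | ∃ i < j, u = w i} ∪ {u | ∃ i < j - 1, u = x i}

section Helpers

variable [Fintype V] {G : SimpleGraph V} {K I : Set V}

lemma ne_of_disj {s t : Set V} (d : Disjoint s t) {a b : V} (ha : a ∈ s) (hb : b ∈ t) :
    a ≠ b := fun h => Set.disjoint_left.mp d ha (h ▸ hb)

lemma mem_altPathVerts_w {j : ℕ} (w x : ℕ → V) {i : ℕ} (hi : i < j) :
    w i ∈ altPathVerts j w x := Or.inl ⟨i, hi, rfl⟩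

lemma mem_altPathVerts_x {j : ℕ} (w x : ℕ → V) {i : ℕ} (hi : i < j - 1) :
    x i ∈ altPathVerts j w x := Or.inr ⟨i, hi, rfl⟩

lemma four_distinct_not_le_three (S : Set V) (y1 y2 y3 y4 : V)
    (m1 : y1 ∈ S) (m2 : y2 ∈ S) (m3 : y3 ∈ S) (m4 : y4 ∈ S)
    (d12 : y1 ≠ y2) (d13 : y1 ≠ y3) (d14 : y1 ≠ y4)
    (d23 : y2 ≠ y3) (d24 : y2 ≠ y4) (d34 : y3 ≠ y4)
    (h : S.ncard ≤ 3) : False := by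
  have hsub : ({y1, y2, y3, y4} : Set V) ⊆ S := by
    intro u hu
    simp only [Set.mem_insert_iff, Set.mem_singleton_iff] at hu
    rcases hu with rfl | rfl | rfl | rfl <;> assumption
  have hc : ({y1, y2, y3, y4} : Set V).ncard = 4 := by
    rw [Set.ncard_insert_of_notMem (by simp [d12, d13, d14]),
        Set.ncard_insert_of_notMem (by simp [d23, d24]),
        Set.ncard_pair d34]
  have := Set.ncard_le_ncard hsub (Set.toFinite S)
  omega

lemma star_at (hfree : StarFree G 4) (c l1 l2 l3 l4 : V)
    (a1 : G.Adj c l1) (a2 : G.Adj c l2) (a3 : G.Adj c l3) (a4 : G.Adj c l4)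
    (d12 : l1 ≠ l2) (d13 : l1 ≠ l3) (d14 : l1 ≠ l4)
    (d23 : l2 ≠ l3) (d24 : l2 ≠ l4) (d34 : l3 ≠ l4)
    (n12 : ¬ G.Adj l1 l2) (n13 : ¬ G.Adj l1 l3) (n14 : ¬ G.Adj l1 l4)
    (n23 : ¬ G.Adj l2 l3) (n24 : ¬ G.Adj l2 l4) (n34 : ¬ G.Adj l3 l4) : False := by
  classical
  apply hfree
  refine ⟨c, {l1, l2, l3, l4}, ?_, ?_, ?_, ?_⟩
  · rw [Finset.card_insert_of_notMem (by simp [d12, d13, d14]),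
        Finset.card_insert_of_notMem (by simp [d23, d24]),
        Finset.card_insert_of_notMem (by simp [d34]), Finset.card_singleton]
  · simp only [Finset.mem_insert, Finset.mem_singleton]
    push_neg
    exact ⟨G.ne_of_adj a1, G.ne_of_adj a2, G.ne_of_adj a3, G.ne_of_adj a4⟩
  · intro l hl
    simp only [Finset.mem_insert, Finset.mem_singleton] at hl
    rcases hl with rfl | rfl | rfl | rfl <;> assumption
  · intro l hl m hm hne
    simp only [Finset.mem_insert, Finset.mem_singleton] at hl hm
    rcases hl with rfl | rfl | rfl | rfl <;> rcases hm with rfl | rfl | rfl | rfl <;>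
      first
        | exact absurd rfl hne
        | assumption
        | exact fun h => n12 h.symm
        | exact fun h => n13 h.symm
        | exact fun h => n14 h.symm
        | exact fun h => n23 h.symm
        | exact fun h => n24 h.symm
        | exact fun h => n34 h.symm

/-- Structure of an "interior" clique vertex `w` of an alternating path avoiding
`A = N(v) ∩ I`, having two independent path-neighbours `y`, `z`:
`w` is adjacent to some `a ∈ A`, its `I`-neighbourhood is exactly `{y, z, a}`,
and every other clique vertex is adjacent to `y`, `z`, or `a`. -/
lemma interior_struct (hsplit : SplitPartition G K I) (hfree : StarFree G 4)
    (hub : ∀ u ∈ K, (G.neighborSet u ∩ I).ncard ≤ 3)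
    {v : V} (hv : v ∈ K) (hdeg : (G.neighborSet v ∩ I).ncard = 3)
    {w y z : V} (hwK : w ∈ K) (hyI : y ∈ I) (hzI : z ∈ I)
    (hyA : y ∉ G.neighborSet v ∩ I) (hzA : z ∉ G.neighborSet v ∩ I)
    (hyz : y ≠ z) (hwy : G.Adj w y) (hwz : G.Adj w z) :
    ∃ a, a ∈ G.neighborSet v ∩ I ∧ G.Adj w a ∧
      (∀ u, u ∈ I → G.Adj w u → u = y ∨ u = z ∨ u = a) ∧
      (∀ k, k ∈ K → k ≠ w → G.Adj k y ∨ G.Adj k z ∨ G.Adj k a) := by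
  obtain ⟨hdisj, -, hclq, hind⟩ := hsplit
  have hKnotI : ∀ u ∈ K, u ∉ I := fun u hu => Set.disjoint_left.mp hdisj hu
  have hwv : w ≠ v := by
    rintro rfl
    exact hyA ⟨hwy, hyI⟩
  obtain ⟨a1, a2, a3, e12, e13, e23, hAeq⟩ := Set.ncard_eq_three.mp hdeg
  have hamem : ∀ b ∈ ({a1, a2, a3} : Set V), b ∈ G.neighborSet v ∩ I := by
    intro b hb; rw [← hAeq] at hb; exact hb
  have ha1 := hamem a1 (by simp)
  have ha2 := hamem a2 (by simp)
  have ha3 := hamem a3 (by simp)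
  -- `w` has a neighbour in `A`, else `v; a1, a2, a3, w` is an induced star
  obtain ⟨a, haA, hwa⟩ : ∃ a ∈ G.neighborSet v ∩ I, G.Adj w a := by
    by_contra hcon
    push_neg at hcon
    have hn1 := hcon a1 ha1
    have hn2 := hcon a2 ha2
    have hn3 := hcon a3 ha3
    exact star_at hfree v a1 a2 a3 w ha1.1 ha2.1 ha3.1
      (hclq hv hwK (Ne.symm hwv))
      e12 e13 (fun h => hKnotI w hwK (h ▸ ha1.2))
      e23 (fun h => hKnotI w hwK (h ▸ ha2.2)) (fun h => hKnotI w hwK (h ▸ ha3.2))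
      (hind ha1.2 ha2.2) (hind ha1.2 ha3.2) (fun h => hn1 h.symm)
      (hind ha2.2 ha3.2) (fun h => hn2 h.symm) (fun h => hn3 h.symm)
  have hay : a ≠ y := fun h => hyA (h ▸ haA)
  have haz : a ≠ z := fun h => hzA (h ▸ haA)
  refine ⟨a, haA, hwa, ?_, ?_⟩
  · -- the I-neighbourhood of w is exactly {y, z, a}
    intro u huI hwu
    by_contra hcon
    push_neg at hcon
    obtain ⟨huy, huz, hua⟩ := hcon
    exact four_distinct_not_le_three (G.neighborSet w ∩ I) y z a u ⟨hwy, hyI⟩ ⟨hwz, hzI⟩ ⟨hwa, haA.2⟩ ⟨hwu, huI⟩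
      hyz (Ne.symm hay) (Ne.symm huy) (Ne.symm haz) (Ne.symm huz) (Ne.symm hua)
      (hub w hwK)
  · -- every other clique vertex sees {y, z, a}
    intro k hkK hkw
    by_contra hcon
    push_neg at hcon
    obtain ⟨hny, hnz, hna⟩ := hcon
    exact star_at hfree w y z a k hwy hwz hwa (hclq hwK hkK (Ne.symm hkw))
      hyz (Ne.symm hay) (fun h => hKnotI k hkK (h ▸ hyI))
      (Ne.symm haz) (fun h => hKnotI k hkK (h ▸ hzI))
      (fun h => hKnotI k hkK (h ▸ haA.2))
      (hind hyI hzI) (hind hyI haA.2) (fun h => hny h.symm)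
      (hind hzI haA.2) (fun h => hnz h.symm) (fun h => hna h.symm)

/-- If two disjoint interior records exist on vertex-disjoint paths, their `A`-vertices agree. -/
lemma a_cross {v : V} {w' y' z' a' : V}
    (char' : ∀ u, u ∈ I → G.Adj w' u → u = y' ∨ u = z' ∨ u = a')
    {w y z a : V}
    (trip : ∀ k, k ∈ K → k ≠ w → G.Adj k y ∨ G.Adj k z ∨ G.Adj k a)
    (hw'K : w' ∈ K) (hw'w : w' ≠ w)
    (hyI : y ∈ I) (hzI : z ∈ I) (haI : a ∈ I)
    (haA : a ∈ G.neighborSet v ∩ I) (hy'A : y' ∉ G.neighborSet v ∩ I)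
    (hz'A : z' ∉ G.neighborSet v ∩ I)
    (hyA : y ∉ G.neighborSet v ∩ I) (hzA : z ∉ G.neighborSet v ∩ I)
    (ha'A : a' ∈ G.neighborSet v ∩ I)
    (hyy' : y ≠ y') (hyz' : y ≠ z') (hzy' : z ≠ y') (hzz' : z ≠ z') : a = a' := by
  rcases trip w' hw'K hw'w with h | h | h
  · rcases char' y hyI h with e | e | e
    · exact absurd e hyy'
    · exact absurd e hyz'
    · exact absurd (by rw [e]; exact ha'A) hyA
  · rcases char' z hzI h with e | e | e
    · exact absurd e hzy'
    · exact absurd e hzz'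
    · exact absurd (by rw [e]; exact ha'A) hzA
  · rcases char' a haI h with e | e | e
    · exact absurd (by rw [← e]; exact haA) hy'A
    · exact absurd (by rw [← e]; exact haA) hz'A
    · exact e

lemma core_contradiction (hsplit : SplitPartition G K I) (hmax : MaxClique G K)
    (hfree : StarFree G 4)
    (hub : ∀ u ∈ K, (G.neighborSet u ∩ I).ncard ≤ 3)
    {v : V} (hv : v ∈ K) (hdeg : (G.neighborSet v ∩ I).ncard = 3)
    (w1 x1 w2 x2 s t : ℕ → V)
    (h1 : IsAltPath G K I (G.neighborSet v ∩ I) 4 w1 x1)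
    (h2 : IsAltPath G K I (G.neighborSet v ∩ I) 4 w2 x2)
    (hq : IsAltPath G K I (G.neighborSet v ∩ I) 3 s t)
    (d12 : Disjoint (altPathVerts 4 w1 x1) (altPathVerts 4 w2 x2))
    (d1q : Disjoint (altPathVerts 4 w1 x1) (altPathVerts 3 s t))
    (d2q : Disjoint (altPathVerts 4 w2 x2) (altPathVerts 3 s t)) : False := by
  obtain ⟨hdisj, -, hclq, hind⟩ := id hsplit
  obtain ⟨-, hw1, hx1, hwi1, hxi1, -, hadj1⟩ := h1
  obtain ⟨-, hw2, hx2, hwi2, hxi2, -, hadj2⟩ := h2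
  obtain ⟨-, hwq, hxq, hwiq, hxiq, -, hadjq⟩ := hq
  -- basic memberships
  have k11 : w1 1 ∈ K := (hw1 1 (by norm_num)).1
  have k12 : w1 2 ∈ K := (hw1 2 (by norm_num)).1
  have k21 : w2 1 ∈ K := (hw2 1 (by norm_num)).1
  have k22 : w2 2 ∈ K := (hw2 2 (by norm_num)).1
  have ks1 : s 1 ∈ K := (hwq 1 (by norm_num)).1
  have i10 : x1 0 ∈ I := (hx1 0 (by norm_num)).1
  have i11 : x1 1 ∈ I := (hx1 1 (by norm_num)).1
  have i12 : x1 2 ∈ I := (hx1 2 (by norm_num)).1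
  have i20 : x2 0 ∈ I := (hx2 0 (by norm_num)).1
  have i21 : x2 1 ∈ I := (hx2 1 (by norm_num)).1
  have i22 : x2 2 ∈ I := (hx2 2 (by norm_num)).1
  have it0 : t 0 ∈ I := (hxq 0 (by norm_num)).1
  have it1 : t 1 ∈ I := (hxq 1 (by norm_num)).1
  have A10 : x1 0 ∉ G.neighborSet v ∩ I := (hx1 0 (by norm_num)).2
  have A11 : x1 1 ∉ G.neighborSet v ∩ I := (hx1 1 (by norm_num)).2
  have A12 : x1 2 ∉ G.neighborSet v ∩ I := (hx1 2 (by norm_num)).2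
  have A20 : x2 0 ∉ G.neighborSet v ∩ I := (hx2 0 (by norm_num)).2
  have A21 : x2 1 ∉ G.neighborSet v ∩ I := (hx2 1 (by norm_num)).2
  have A22 : x2 2 ∉ G.neighborSet v ∩ I := (hx2 2 (by norm_num)).2
  have At0 : t 0 ∉ G.neighborSet v ∩ I := (hxq 0 (by norm_num)).2
  have At1 : t 1 ∉ G.neighborSet v ∩ I := (hxq 1 (by norm_num)).2
  -- distinctness within a path
  have hx1ne : ∀ {i k : ℕ}, i < 3 → k < 3 → i ≠ k → x1 i ≠ x1 k :=
    fun hi hk hik h => hik (hxi1 _ (by omega) _ (by omega) h)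
  have hx2ne : ∀ {i k : ℕ}, i < 3 → k < 3 → i ≠ k → x2 i ≠ x2 k :=
    fun hi hk hik h => hik (hxi2 _ (by omega) _ (by omega) h)
  have htne : t 0 ≠ t 1 := fun h => by simpa using hxiq 0 (by norm_num) 1 (by norm_num) h
  -- memberships in the path vertex sets
  have m1x : ∀ {i : ℕ}, i < 3 → x1 i ∈ altPathVerts 4 w1 x1 :=
    fun hi => mem_altPathVerts_x w1 x1 (by omega)
  have m2x : ∀ {i : ℕ}, i < 3 → x2 i ∈ altPathVerts 4 w2 x2 :=
    fun hi => mem_altPathVerts_x w2 x2 (by omega)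
  have mqx : ∀ {i : ℕ}, i < 2 → t i ∈ altPathVerts 3 s t :=
    fun hi => mem_altPathVerts_x s t (by omega)
  have m1w : ∀ {i : ℕ}, i < 4 → w1 i ∈ altPathVerts 4 w1 x1 :=
    fun hi => mem_altPathVerts_w w1 x1 hi
  have m2w : ∀ {i : ℕ}, i < 4 → w2 i ∈ altPathVerts 4 w2 x2 :=
    fun hi => mem_altPathVerts_w w2 x2 hi
  have mqw : ∀ {i : ℕ}, i < 3 → s i ∈ altPathVerts 3 s t :=
    fun hi => mem_altPathVerts_w s t hi
  -- interior structure records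
  obtain ⟨a11, ha11A, hw11a, char11, trip11⟩ :=
    interior_struct hsplit hfree hub hv hdeg k11 i10 i11 A10 A11
      (hx1ne (by norm_num) (by norm_num) (by norm_num))
      (hadj1 0 (by norm_num)).2 (hadj1 1 (by norm_num)).1
  obtain ⟨a12, ha12A, hw12a, char12, trip12⟩ :=
    interior_struct hsplit hfree hub hv hdeg k12 i11 i12 A11 A12
      (hx1ne (by norm_num) (by norm_num) (by norm_num))
      (hadj1 1 (by norm_num)).2 (hadj1 2 (by norm_num)).1
  obtain ⟨a21, ha21A, hw21a, char21, trip21⟩ :=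
    interior_struct hsplit hfree hub hv hdeg k21 i20 i21 A20 A21
      (hx2ne (by norm_num) (by norm_num) (by norm_num))
      (hadj2 0 (by norm_num)).2 (hadj2 1 (by norm_num)).1
  obtain ⟨a22, ha22A, hw22a, char22, trip22⟩ :=
    interior_struct hsplit hfree hub hv hdeg k22 i21 i22 A21 A22
      (hx2ne (by norm_num) (by norm_num) (by norm_num))
      (hadj2 1 (by norm_num)).2 (hadj2 2 (by norm_num)).1
  obtain ⟨aq, haqA, hwsa, charq, tripq⟩ :=
    interior_struct hsplit hfree hub hv hdeg ks1 it0 it1 At0 At1 htne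
      (hadjq 0 (by norm_num)).2 (hadjq 1 (by norm_num)).1
  -- all the A-vertices of the interior records agree
  have e11 : a11 = aq :=
    a_cross charq trip11 ks1
      (Ne.symm (ne_of_disj d1q (m1w (by norm_num)) (mqw (by norm_num))))
      i10 i11 ha11A.2 ha11A At0 At1 A10 A11 haqA
      (ne_of_disj d1q (m1x (by norm_num)) (mqx (by norm_num)))
      (ne_of_disj d1q (m1x (by norm_num)) (mqx (by norm_num)))
      (ne_of_disj d1q (m1x (by norm_num)) (mqx (by norm_num)))
      (ne_of_disj d1q (m1x (by norm_num)) (mqx (by norm_num)))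
  have e12 : a12 = aq :=
    a_cross charq trip12 ks1
      (Ne.symm (ne_of_disj d1q (m1w (by norm_num)) (mqw (by norm_num))))
      i11 i12 ha12A.2 ha12A At0 At1 A11 A12 haqA
      (ne_of_disj d1q (m1x (by norm_num)) (mqx (by norm_num)))
      (ne_of_disj d1q (m1x (by norm_num)) (mqx (by norm_num)))
      (ne_of_disj d1q (m1x (by norm_num)) (mqx (by norm_num)))
      (ne_of_disj d1q (m1x (by norm_num)) (mqx (by norm_num)))
  have e21 : a21 = aq :=
    a_cross charq trip21 ks1
      (Ne.symm (ne_of_disj d2q (m2w (by norm_num)) (mqw (by norm_num))))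
      i20 i21 ha21A.2 ha21A At0 At1 A20 A21 haqA
      (ne_of_disj d2q (m2x (by norm_num)) (mqx (by norm_num)))
      (ne_of_disj d2q (m2x (by norm_num)) (mqx (by norm_num)))
      (ne_of_disj d2q (m2x (by norm_num)) (mqx (by norm_num)))
      (ne_of_disj d2q (m2x (by norm_num)) (mqx (by norm_num)))
  have e22 : a22 = aq :=
    a_cross charq trip22 ks1
      (Ne.symm (ne_of_disj d2q (m2w (by norm_num)) (mqw (by norm_num))))
      i21 i22 ha22A.2 ha22A At0 At1 A21 A22 haqA
      (ne_of_disj d2q (m2x (by norm_num)) (mqx (by norm_num)))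
      (ne_of_disj d2q (m2x (by norm_num)) (mqx (by norm_num)))
      (ne_of_disj d2q (m2x (by norm_num)) (mqx (by norm_num)))
      (ne_of_disj d2q (m2x (by norm_num)) (mqx (by norm_num)))
  have hw11q : G.Adj (w1 1) aq := e11 ▸ hw11a
  have hw12q : G.Adj (w1 2) aq := e12 ▸ hw12a
  have hw21q : G.Adj (w2 1) aq := e21 ▸ hw21a
  have hw22q : G.Adj (w2 2) aq := e22 ▸ hw22a
  have trip11' : ∀ k, k ∈ K → k ≠ w1 1 →
      G.Adj k (x1 0) ∨ G.Adj k (x1 1) ∨ G.Adj k aq := e11 ▸ trip11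
  have trip12' : ∀ k, k ∈ K → k ≠ w1 2 →
      G.Adj k (x1 1) ∨ G.Adj k (x1 2) ∨ G.Adj k aq := e12 ▸ trip12
  have trip21' : ∀ k, k ∈ K → k ≠ w2 1 →
      G.Adj k (x2 0) ∨ G.Adj k (x2 1) ∨ G.Adj k aq := e21 ▸ trip21
  have trip22' : ∀ k, k ∈ K → k ≠ w2 2 →
      G.Adj k (x2 1) ∨ G.Adj k (x2 2) ∨ G.Adj k aq := e22 ▸ trip22
  have hva : G.Adj v aq := haqA.1
  -- a clique vertex missing aq
  obtain ⟨k, hkK, hka⟩ : ∃ k ∈ K, ¬ G.Adj k aq := by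
    by_contra hcon
    push_neg at hcon
    have hcl : G.IsClique (insert aq K) :=
      hclq.insert (fun b hb _ => (hcon b hb).symm)
    have hle := hmax.2 _ hcl
    have haK : aq ∉ K := fun h => Set.disjoint_left.mp hdisj h haqA.2
    rw [Set.ncard_insert_of_notMem haK (Set.toFinite K)] at hle
    omega
  have hkv : k ≠ v := fun h => hka (by rw [h]; exact hva)
  have hk11 : k ≠ w1 1 := fun h => hka (by rw [h]; exact hw11q)
  have hk12 : k ≠ w1 2 := fun h => hka (by rw [h]; exact hw12q)
  have hk21 : k ≠ w2 1 := fun h => hka (by rw [h]; exact hw21q)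
  have hk22 : k ≠ w2 2 := fun h => hka (by rw [h]; exact hw22q)
  have hks1 : k ≠ s 1 := fun h => hka (by rw [h]; exact hwsa)
  -- k sees the short path Q
  have hobtq : ∃ u, u ∈ altPathVerts 3 s t ∧ u ∈ I ∧
      u ∉ G.neighborSet v ∩ I ∧ G.Adj k u := by
    rcases tripq k hkK hks1 with h | h | h
    · exact ⟨t 0, mqx (by norm_num), it0, At0, h⟩
    · exact ⟨t 1, mqx (by norm_num), it1, At1, h⟩
    · exact absurd h hka
  -- k is adjacent to the middle independent vertex of each long path
  have hm1 : G.Adj k (x1 1) := by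
    by_contra hno
    have h10 : G.Adj k (x1 0) := by
      rcases trip11' k hkK hk11 with h | h | h
      exacts [h, absurd h hno, absurd h hka]
    have h12 : G.Adj k (x1 2) := by
      rcases trip12' k hkK hk12 with h | h | h
      exacts [absurd h hno, h, absurd h hka]
    obtain ⟨u2, hu2v, hu2I, hu2a⟩ : ∃ u, u ∈ altPathVerts 4 w2 x2 ∧ u ∈ I ∧ G.Adj k u := by
      rcases trip21' k hkK hk21 with h | h | h
      · exact ⟨x2 0, m2x (by norm_num), i20, h⟩
      · exact ⟨x2 1, m2x (by norm_num), i21, h⟩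
      · exact absurd h hka
    obtain ⟨ut, hutv, hutI, -, hkut⟩ := hobtq
    exact four_distinct_not_le_three (G.neighborSet k ∩ I) (x1 0) (x1 2) u2 ut
      ⟨h10, i10⟩ ⟨h12, i12⟩ ⟨hu2a, hu2I⟩ ⟨hkut, hutI⟩
      (hx1ne (by norm_num) (by norm_num) (by norm_num))
      (ne_of_disj d12 (m1x (by norm_num)) hu2v)
      (ne_of_disj d1q (m1x (by norm_num)) hutv)
      (ne_of_disj d12 (m1x (by norm_num)) hu2v)
      (ne_of_disj d1q (m1x (by norm_num)) hutv)
      (ne_of_disj d2q hu2v hutv)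
      (hub k hkK)
  have hm2 : G.Adj k (x2 1) := by
    by_contra hno
    have h20 : G.Adj k (x2 0) := by
      rcases trip21' k hkK hk21 with h | h | h
      exacts [h, absurd h hno, absurd h hka]
    have h22 : G.Adj k (x2 2) := by
      rcases trip22' k hkK hk22 with h | h | h
      exacts [absurd h hno, h, absurd h hka]
    obtain ⟨u1, hu1v, hu1I, hu1a⟩ : ∃ u, u ∈ altPathVerts 4 w1 x1 ∧ u ∈ I ∧ G.Adj k u := by
      rcases trip11' k hkK hk11 with h | h | h
      · exact ⟨x1 0, m1x (by norm_num), i10, h⟩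
      · exact ⟨x1 1, m1x (by norm_num), i11, h⟩
      · exact absurd h hka
    obtain ⟨ut, hutv, hutI, -, hkut⟩ := hobtq
    exact four_distinct_not_le_three (G.neighborSet k ∩ I) (x2 0) (x2 2) u1 ut
      ⟨h20, i20⟩ ⟨h22, i22⟩ ⟨hu1a, hu1I⟩ ⟨hkut, hutI⟩
      (hx2ne (by norm_num) (by norm_num) (by norm_num))
      (Ne.symm (ne_of_disj d12 hu1v (m2x (by norm_num))))
      (ne_of_disj d2q (m2x (by norm_num)) hutv)
      (Ne.symm (ne_of_disj d12 hu1v (m2x (by norm_num))))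
      (ne_of_disj d2q (m2x (by norm_num)) hutv)
      (ne_of_disj d1q hu1v hutv)
      (hub k hkK)
  -- final induced star at k
  obtain ⟨ut, hutv, hutI, hutA, hkut⟩ := hobtq
  have hxv : ∀ {u : V}, u ∈ I → u ≠ v := fun hu h =>
    Set.disjoint_left.mp hdisj hv (h ▸ hu)
  exact star_at hfree k (x1 1) (x2 1) ut v
    hm1 hm2 hkut (hclq hkK hv hkv)
    (ne_of_disj d12 (m1x (by norm_num)) (m2x (by norm_num)))
    (ne_of_disj d1q (m1x (by norm_num)) hutv)
    (hxv i11)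
    (ne_of_disj d2q (m2x (by norm_num)) hutv)
    (hxv i21)
    (hxv hutI)
    (hind i11 i21) (hind i11 hutI) (fun h => A11 ⟨h.symm, i11⟩)
    (hind i21 hutI) (fun h => A21 ⟨h.symm, i21⟩) (fun h => hutA ⟨h.symm, hutI⟩)

lemma isAltPath_truncate {A : Set V} {w x : ℕ → V}
    (h : IsAltPath G K I A 4 w x) : IsAltPath G K I A 3 w x := by
  obtain ⟨-, hw, hx, hwi, hxi, hwx, hadj⟩ := h
  exact ⟨by norm_num, fun i hi => hw i (by omega), fun i hi => hx i (by omega),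
    fun i hi k hk h => hwi i (by omega) k (by omega) h,
    fun i hi k hk h => hxi i (by omega) k (by omega) h,
    fun i hi k hk => hwx i (by omega) k (by omega),
    fun i hi => hadj i (by omega)⟩

lemma altPathVerts_three_subset (w x : ℕ → V) :
    altPathVerts 3 w x ⊆ altPathVerts 4 w x := by
  rintro u (⟨i, hi, rfl⟩ | ⟨i, hi, rfl⟩)
  · exact Or.inl ⟨i, by omega, rfl⟩
  · exact Or.inr ⟨i, by omega, rfl⟩

end Helpers

/-- The collection of vertex-disjoint alternating paths contains at most two
paths on 7 vertices (`j = 4`), and if it contains two such paths then it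
contains no path on 5 vertices (`j = 3`). -/
theorem at_most_two_seven_vertex_paths [Fintype V] (G : SimpleGraph V)
    (K I : Set V) (hsplit : SplitPartition G K I) (hmax : MaxClique G K)
    (h2 : TwoConnected G) (hfree : StarFree G 4)
    (hI : 8 ≤ I.ncard) (hKI : I.ncard ≤ K.ncard)
    (hub : ∀ u ∈ K, (G.neighborSet u ∩ I).ncard ≤ 3)
    (v : V) (hv : v ∈ K) (hdeg : (G.neighborSet v ∩ I).ncard = 3)
    (hshort : ¬ HasShortCycle G K I) :
    (¬ ∃ (w₁ x₁ w₂ x₂ w₃ x₃ : ℕ → V),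
        IsAltPath G K I (G.neighborSet v ∩ I) 4 w₁ x₁ ∧
        IsAltPath G K I (G.neighborSet v ∩ I) 4 w₂ x₂ ∧
        IsAltPath G K I (G.neighborSet v ∩ I) 4 w₃ x₃ ∧
        Disjoint (altPathVerts 4 w₁ x₁) (altPathVerts 4 w₂ x₂) ∧
        Disjoint (altPathVerts 4 w₁ x₁) (altPathVerts 4 w₃ x₃) ∧
        Disjoint (altPathVerts 4 w₂ x₂) (altPathVerts 4 w₃ x₃)) ∧
    (∀ w₁ x₁ w₂ x₂ : ℕ → V,
        IsAltPath G K I (G.neighborSet v ∩ I) 4 w₁ x₁ →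
        IsAltPath G K I (G.neighborSet v ∩ I) 4 w₂ x₂ →
        Disjoint (altPathVerts 4 w₁ x₁) (altPathVerts 4 w₂ x₂) →
        ¬ ∃ (s t : ℕ → V), IsAltPath G K I (G.neighborSet v ∩ I) 3 s t ∧
            Disjoint (altPathVerts 4 w₁ x₁) (altPathVerts 3 s t) ∧
            Disjoint (altPathVerts 4 w₂ x₂) (altPathVerts 3 s t)) := by
  constructor
  · rintro ⟨w1, x1, w2, x2, w3, x3, p1, p2, p3, d12, d13, d23⟩
    exact core_contradiction hsplit hmax hfree hub hv hdeg w1 x1 w2 x2 w3 x3 p1 p2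
      (isAltPath_truncate p3) d12
      (Disjoint.mono_right (altPathVerts_three_subset w3 x3) d13)
      (Disjoint.mono_right (altPathVerts_three_subset w3 x3) d23)
  · rintro w1 x1 w2 x2 p1 p2 d12 ⟨s, t, hq, d1q, d2q⟩
    exact core_contradiction hsplit hmax hfree hub hv hdeg w1 x1 w2 x2 s t p1 p2 hq
      d12 d1q d2q
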